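/- arXiv:2104.12989 — 2 statements merged into one kernel-verified Lean document; each statement's English description precedes it below -/
import Mathlib

section
/- Let N ⊇ A be a model and N⁺ = (N, U₁, …, U_k) an expansion of N by finitely many unary predicates. Then rtp(N⁺, A) ≤ ℶ_{ω+1}(rtp(N, A)), where rtp counts the number of complete types over A realized by finite tuples from N \ A (in the respective languages). -/
open FirstOrder FirstOrder.Language Cardinal Set

universe u v w

namespace MonadicNIP

variable {L : FirstOrder.Language.{u, u}} {C : Type u} [L.Structure C]

/-- The complete type of the tuple `a` over the parameter set `B`:
all formulas with parameters from `B` and variables `α` satisfied by `a`. -/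
def tpSet {α : Type v} (B : Set C) (a : α → C) : Set (L.Formula (B ⊕ α)) :=
  {φ | φ.Realize (Sum.elim (Subtype.val : B → C) a)}

/-- A set of formulas over `B` (a "type") is finitely satisfied in `M` if each of
its formulas is realized by a tuple from `M`. -/
def FinSat (M : Set C) {α : Type v} {B : Set C} (p : Set (L.Formula (B ⊕ α))) : Prop :=
  ∀ φ ∈ p, ∃ m : α → C, (∀ i, m i ∈ M) ∧
    Formula.Realize φ (Sum.elim (Subtype.val : B → C) m)

/-- `p` is a complete type over `B` (in the monster `C`): finitely satisfiable
in `C` and deciding every formula. -/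
def IsCompleteType {α : Type v} (B : Set C) (p : Set (L.Formula (B ⊕ α))) : Prop :=
  (∀ s : Finset (L.Formula (B ⊕ α)), ↑s ⊆ p →
      ∃ a : α → C, ∀ φ ∈ s, Formula.Realize φ (Sum.elim (Subtype.val : B → C) a)) ∧
    ∀ φ : L.Formula (B ⊕ α), φ ∈ p ∨ φ.not ∈ p

/-- `tp(A/B)` is finitely satisfied in `M` (formulated without an enumeration of `A`). -/
def SetFinSat (L : FirstOrder.Language.{u, u}) {C : Type u} [L.Structure C] (M B A : Set C) : Prop :=
  ∀ (n : ℕ) (φ : L.Formula (B ⊕ Fin n)) (a : Fin n → C), (∀ i, a i ∈ A) →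
    φ.Realize (Sum.elim (Subtype.val : B → C) a) →
    ∃ m : Fin n → C, (∀ i, m i ∈ M) ∧ φ.Realize (Sum.elim (Subtype.val : B → C) m)

/-- `⟨A i : i ∈ I⟩` is an `M`-f.s. sequence over `B`. -/
def IsFSSeq (L : FirstOrder.Language.{u, u}) {C : Type u} [L.Structure C] (M B : Set C) {I : Type v} [LinearOrder I] (A : I → Set C) : Prop :=
  ∀ i : I, SetFinSat L M (B ∪ ⋃ j < i, A j) (A i)

/-- The average type of an ultrafilter `U` on `M^n` over the parameter set `B`. -/
def Av {n : ℕ} {M : Set C} (U : Ultrafilter (Fin n → M)) (B : Set C) :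
    Set (L.Formula (B ⊕ Fin n)) :=
  {φ | {m : Fin n → M |
      Formula.Realize φ (Sum.elim (Subtype.val : B → C) (fun i => (m i : C)))} ∈ U}

/-- `C0` is full (for non-splitting over `M`): every complete type over `M`
in finitely many variables (realized in the monster) is realized in `C0`. -/
def IsFull (L : FirstOrder.Language.{u, u}) {C : Type u} [L.Structure C] (M C0 : Set C) : Prop :=
  ∀ (n : ℕ) (a : Fin n → C), ∃ c : Fin n → C, (∀ i, c i ∈ C0) ∧
    tpSet (L := L) M a = tpSet (L := L) M c

/-- The sequence of tuples `a` is indiscernible over `B`. -/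
def IndiscernibleOver (L : FirstOrder.Language.{u, u}) {C : Type u} [L.Structure C] {I : Type v} [LinearOrder I] {α : Type w} (B : Set C)
    (a : I → α → C) : Prop :=
  ∀ (n : ℕ) (i j : Fin n → I), StrictMono i → StrictMono j →
    tpSet (L := L) B (fun p : Fin n × α => a (i p.1) p.2) =
      tpSet (L := L) B (fun p : Fin n × α => a (j p.1) p.2)

/-- The type `p` over `B` does not split over `M0`: parameter tuples from `B`
with the same type over `M0` are interchangeable in `p`. -/
def NotSplitOver (M0 : Set C) {B : Set C} {α : Type v}
    (p : Set (L.Formula (B ⊕ α))) : Prop :=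
  ∀ (k : ℕ) (b b' : Fin k → B) (φ : L.Formula (Fin k ⊕ α)),
    tpSet (L := L) M0 (fun i => (b i : C)) = tpSet (L := L) M0 (fun i => (b' i : C)) →
    (φ.relabel (Sum.elim (fun i => Sum.inl (b i)) Sum.inr) ∈ p ↔
      φ.relabel (Sum.elim (fun i => Sum.inl (b' i)) Sum.inr) ∈ p)


/-- Quantifier depth of a bounded formula. -/
def qDepth {α : Type v} : ∀ {n : ℕ}, L.BoundedFormula α n → ℕ
  | _, BoundedFormula.falsum => 0
  | _, BoundedFormula.equal _ _ => 0
  | _, BoundedFormula.rel _ _ => 0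
  | _, BoundedFormula.imp f g => max (qDepth f) (qDepth g)
  | _, BoundedFormula.all f => qDepth f + 1

/-- `rtp L N A`: the number of complete types over `A` realized by finite tuples
from `N ∖ A`. -/
noncomputable def rtp (L : FirstOrder.Language.{u, u}) (N : Type u) [L.Structure N]
    (A : Set N) : Cardinal.{u} :=
  Cardinal.mk ↥(Set.range (fun p : Σ n : ℕ, {a : Fin n → N // ∀ i, a i ∉ A} =>
    (⟨p.1, tpSet (L := L) A p.2.1⟩ : Σ n : ℕ, Set (L.Formula (A ⊕ Fin n)))))

/-- `rK L N A k`: the number of `∼ₖ`-classes of finite tuples from `N ∖ A`, where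
tuples are `∼ₖ`-equivalent when they satisfy the same formulas over `A` of
quantifier depth at most `k`. -/
noncomputable def rK (L : FirstOrder.Language.{u, u}) (N : Type u) [L.Structure N]
    (A : Set N) (k : ℕ) : Cardinal.{u} :=
  Cardinal.mk ↥(Set.range (fun p : Σ n : ℕ, {a : Fin n → N // ∀ i, a i ∉ A} =>
    (⟨p.1, {φ : L.Formula (A ⊕ Fin p.1) | qDepth φ ≤ k ∧
        Formula.Realize φ (Sum.elim (Subtype.val : A → N) p.2.1)}⟩ :
      Σ n : ℕ, Set (L.Formula (A ⊕ Fin n)))))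

/-- Iterated power sets: `iterPow κ n = ℶ_n(κ)` relative to `κ`. -/
def iterPow (κ : Cardinal.{u}) : ℕ → Cardinal.{u}
  | 0 => κ
  | n + 1 => 2 ^ iterPow κ n

/-- `ℶ_{ω+1}(κ)`, the `(ω+1)`-st beth number relative to `κ`. -/
noncomputable def bethOmega1 (κ : Cardinal.{u}) : Cardinal.{u} :=
  2 ^ ⨆ n : ℕ, iterPow κ n

/-- The language consisting of `k` unary relation symbols. -/
def unaryLang (k : ℕ) : FirstOrder.Language.{0, 0} :=
  ⟨fun _ => Empty, fun n => match n with | 1 => Fin k | _ => Empty⟩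

/-- The structure on `N` interpreting the `k` unary predicates as the sets `U i`. -/
def unaryStructure {N : Type u} (k : ℕ) (U : Fin k → Set N) :
    (unaryLang k).Structure N where
  funMap := fun f _ => f.elim
  RelMap := fun {n} r x => match n, r with
    | 1, i => x 0 ∈ U i

section Aux

variable {L : FirstOrder.Language.{u, u}} {N : Type u} [inst : L.Structure N]

/-! ### qDepth lemmas -/

section QD
variable {α : Type v} {β : Type w}

theorem qDepth_castLE : ∀ {m n : ℕ} (h : m ≤ n) (φ : L.BoundedFormula α m),
    qDepth (φ.castLE h) = qDepth φ
  | _, _, _, BoundedFormula.falsum => rfl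
  | _, _, _, BoundedFormula.equal _ _ => rfl
  | _, _, _, BoundedFormula.rel _ _ => rfl
  | _, _, h, BoundedFormula.imp f g => by
      simp [BoundedFormula.castLE, qDepth, qDepth_castLE h f, qDepth_castLE h g]
  | _, _, h, BoundedFormula.all f => by
      simp [BoundedFormula.castLE, qDepth, qDepth_castLE _ f]

theorem qDepth_mapTermRel {L' : FirstOrder.Language.{u,u}} {g : ℕ → ℕ}
    (ft : ∀ n, L.Term (α ⊕ Fin n) → L'.Term (β ⊕ Fin (g n)))
    (fr : ∀ n, L.Relations n → L'.Relations n)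
    (h : ∀ n, L'.BoundedFormula β (g (n + 1)) → L'.BoundedFormula β (g n + 1))
    (hh : ∀ n ψ, qDepth (h n ψ) = qDepth ψ) :
    ∀ {n : ℕ} (φ : L.BoundedFormula α n),
      qDepth (φ.mapTermRel ft fr h) = qDepth φ
  | _, BoundedFormula.falsum => rfl
  | _, BoundedFormula.equal _ _ => rfl
  | _, BoundedFormula.rel _ _ => rfl
  | _, BoundedFormula.imp f g => by
      simp [BoundedFormula.mapTermRel, qDepth, qDepth_mapTermRel ft fr h hh f,
        qDepth_mapTermRel ft fr h hh g]
  | _, BoundedFormula.all f => by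
      simp [BoundedFormula.mapTermRel, qDepth, hh, qDepth_mapTermRel ft fr h hh f]

theorem qDepth_relabel {m : ℕ} (g : α → β ⊕ Fin m) {l : ℕ} (φ : L.BoundedFormula α l) :
    qDepth (φ.relabel g) = qDepth φ :=
  qDepth_mapTermRel _ _ _ (fun _ ψ => qDepth_castLE _ ψ) φ

theorem qDepth_toFormula : ∀ {l : ℕ} (φ : L.BoundedFormula α l),
    qDepth φ.toFormula = qDepth φ
  | _, BoundedFormula.falsum => rfl
  | _, BoundedFormula.equal _ _ => rfl
  | _, BoundedFormula.rel _ _ => rfl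
  | _, BoundedFormula.imp f g => by
      simp [BoundedFormula.toFormula, qDepth, qDepth_toFormula f, qDepth_toFormula g]
  | _, BoundedFormula.all f => by
      simp [BoundedFormula.toFormula, qDepth, qDepth_relabel, qDepth_toFormula f]

theorem qDepth_formula_relabel (g : α → β) (φ : L.Formula α) :
    qDepth (φ.relabel g) = qDepth φ :=
  qDepth_relabel _ φ

end QD

/-! ### Stripping unary-language terms -/

variable {k : ℕ} [inst2 : (unaryLang k).Structure N]

/-- Terms of `L.sum (unaryLang k)` are really `L`-terms, since `unaryLang k` has no
function symbols. -/
def stripTerm {β : Type w} : (L.sum (unaryLang k)).Term β → L.Term β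
  | Term.var x => Term.var x
  | Term.func f ts =>
    match f with
    | Sum.inl f => Term.func f (fun i => stripTerm (ts i))
    | Sum.inr e => Empty.elim e

theorem realize_stripTerm {β : Type w} (t : (L.sum (unaryLang k)).Term β) (v : β → N) :
    Term.realize v t = Term.realize v (stripTerm t) := by
  induction t with
  | var => rfl
  | func f ts ih =>
      cases f with
      | inl f => simp only [Term.realize, stripTerm, funMap_sumInl]; exact congrArg _ (funext ih)
      | inr e => exact Empty.elim e

/-! ### Term helpers over `A ⊕ Fin n` -/

variable {A : Set N}

/-- Convert a closed-level term of the sum language into an `L`-term over `A ⊕ Fin n`. -/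
def downTerm {n : ℕ} (t : (L.sum (unaryLang k)).Term ((A ⊕ Fin n) ⊕ Fin 0)) :
    L.Term (A ⊕ Fin n) :=
  (stripTerm t).relabel (Sum.elim id Fin.elim0)

theorem realize_downTerm {n : ℕ} (t : (L.sum (unaryLang k)).Term ((A ⊕ Fin n) ⊕ Fin 0))
    (v : (A ⊕ Fin n) → N) (xs : Fin 0 → N) :
    Term.realize (Sum.elim v xs) t = Term.realize v (downTerm t) := by
  rw [realize_stripTerm, downTerm, Term.realize_relabel]
  congr 1
  funext x
  cases x with
  | inl x => rfl
  | inr i => exact i.elim0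

/-- Lift an `L`-term over `A ⊕ Fin n` to one over `A ⊕ Fin (n+1)`. -/
def liftTerm {n : ℕ} (t : L.Term (A ⊕ Fin n)) : L.Term (A ⊕ Fin (n + 1)) :=
  t.relabel (Sum.map id Fin.castSucc)

theorem realize_liftTerm {n : ℕ} (t : L.Term (A ⊕ Fin n)) (w : A → N) (b : Fin n → N) (c : N) :
    Term.realize (Sum.elim w (Fin.snoc b c)) (liftTerm t) = Term.realize (Sum.elim w b) t := by
  rw [liftTerm, Term.realize_relabel]
  congr 1
  funext x
  cases x with
  | inl x => rfl
  | inr i => simp [Function.comp, Fin.snoc_castSucc]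

theorem snoc_notin {n : ℕ} {a : Fin n → N} (ha : ∀ i, a i ∉ A) {c : N} (hc : c ∉ A) :
    ∀ i, Fin.snoc (α := fun _ => N) a c i ∉ A := by
  intro i
  refine Fin.lastCases (motive := fun i => Fin.snoc (α := fun _ => N) a c i ∉ A) ?_ (fun j => ?_) i
  · simpa using hc
  · simpa using ha j

end Aux

/-! ### The invariants -/

/-- The codomain of the `rtp` classifying map. -/
def SG (L : FirstOrder.Language.{u, u}) {N : Type u} (A : Set N) : Type u :=
  Σ n : ℕ, Set (L.Formula (A ⊕ Fin n))

/-- Finite tuples avoiding `A`. -/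
def Tup (N : Type u) (A : Set N) : Type u :=
  Σ n : ℕ, {a : Fin n → N // ∀ i, a i ∉ A}

/-- The `rtp` classifying map. -/
def TP (L : FirstOrder.Language.{u, u}) {N : Type u} [L.Structure N] (A : Set N) :
    Tup N A → SG L A := fun p => ⟨p.1, tpSet A p.2.1⟩

theorem rtp_eq (L : FirstOrder.Language.{u, u}) (N : Type u) [L.Structure N] (A : Set N) :
    rtp L N A = #(Set.range (TP L A)) := rfl

/-- The `U`-pattern of an element. -/
def upat (k : ℕ) {N : Type u} [inst2 : (unaryLang k).Structure N] (c : N) :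
    Set (ULift.{u} (Fin k)) :=
  {i | @Structure.RelMap (unaryLang k) N inst2 1 i.down (fun _ => c)}

/-- Codomains of the depth-`d` invariants. -/
def TInv (L : FirstOrder.Language.{u, u}) {N : Type u} (A : Set N) (k : ℕ) : ℕ → Type u
  | 0 => SG L A × Set (SG L A × Set (ULift.{u} (Fin k)))
  | d + 1 => TInv L A k d × Set (TInv L A k d)

/-- The depth-`d` invariant of a tuple. -/
def inv {L : FirstOrder.Language.{u, u}} {N : Type u} [L.Structure N] (k : ℕ)
    [inst2 : (unaryLang k).Structure N] (A : Set N) :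
    (d : ℕ) → {n : ℕ} → (Fin n → N) → TInv L A k d
  | 0, n, a =>
    (⟨n, tpSet A a⟩, {q | ∃ c, c ∉ A ∧ q = (⟨n + 1, tpSet A (Fin.snoc a c)⟩, upat k c)})
  | d + 1, _, a => (inv k A d a, {t | ∃ c, c ∉ A ∧ t = inv k A d (Fin.snoc a c)})

theorem inv_mono {L : FirstOrder.Language.{u, u}} {N : Type u} [L.Structure N] {k : ℕ}
    [inst2 : (unaryLang k).Structure N] {A : Set N} :
    ∀ {d e : ℕ}, e ≤ d → ∀ {n : ℕ} {a a' : Fin n → N},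
    inv (L := L) k A d a = inv (L := L) k A d a' →
      inv (L := L) k A e a = inv (L := L) k A e a' := by
  intro d
  induction d with
  | zero => intro e he n a a' h; rw [Nat.le_zero.mp he]; exact h
  | succ d ih =>
      intro e he n a a' h
      rcases Nat.eq_or_lt_of_le he with rfl | hlt
      · exact h
      · exact ih (Nat.lt_succ_iff.mp hlt) (congrArg Prod.fst h)

section Main

variable {L : FirstOrder.Language.{u, u}} {N : Type u} [inst : L.Structure N] {k : ℕ}
  [inst2 : (unaryLang k).Structure N] {A : Set N}

theorem sigma_mk_snd {γ : ℕ → Type v} {n : ℕ} {s s' : γ n}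
    (h : (⟨n, s⟩ : Σ n, γ n) = ⟨n, s'⟩) : s = s' := by
  simpa using h

/-- Push the single bound variable of a bounded formula into a new free variable. -/
def lift1 {n : ℕ} (f : (L.sum (unaryLang k)).BoundedFormula (A ⊕ Fin n) 1) :
    (L.sum (unaryLang k)).Formula (A ⊕ Fin (n + 1)) :=
  f.toFormula.relabel (Sum.elim (Sum.map id Fin.castSucc) (fun _ => Sum.inr (Fin.last n)))

theorem qDepth_lift1 {n : ℕ} (f : (L.sum (unaryLang k)).BoundedFormula (A ⊕ Fin n) 1) :
    qDepth (lift1 f) = qDepth f := by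
  rw [lift1, qDepth_formula_relabel, qDepth_toFormula]

theorem realize_lift1 {n : ℕ} (f : (L.sum (unaryLang k)).BoundedFormula (A ⊕ Fin n) 1)
    (b : Fin n → N) (c : N) :
    Formula.Realize (lift1 f) (Sum.elim Subtype.val (Fin.snoc b c)) ↔
      f.Realize (Sum.elim Subtype.val b) (fun _ => c) := by
  rw [lift1, Formula.realize_relabel, BoundedFormula.realize_toFormula]
  set g : ((A ⊕ Fin n) ⊕ Fin 1) → (A ⊕ Fin (n + 1)) :=
    Sum.elim (Sum.map id Fin.castSucc) (fun _ => Sum.inr (Fin.last n)) with hg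
  have h1 : ((Sum.elim (Subtype.val : A → N) (Fin.snoc b c)) ∘ g) ∘
      (Sum.inl : (A ⊕ Fin n) → (A ⊕ Fin n) ⊕ Fin 1) = Sum.elim Subtype.val b := by
    funext x
    cases x with
    | inl x => rfl
    | inr i => simp [hg, Function.comp, Fin.snoc_castSucc]
  have h2 : ((Sum.elim (Subtype.val : A → N) (Fin.snoc b c)) ∘ g) ∘
      (Sum.inr : Fin 1 → (A ⊕ Fin n) ⊕ Fin 1) = (fun _ : Fin 1 => c) := by
    funext i
    simp [hg, Function.comp, Fin.snoc_last]
  rw [h1, h2]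

/-- Substitute a parameter from `A` for the single bound variable. -/
def subst1 {n : ℕ} (c : A) (f : (L.sum (unaryLang k)).BoundedFormula (A ⊕ Fin n) 1) :
    (L.sum (unaryLang k)).Formula (A ⊕ Fin n) :=
  f.toFormula.relabel (Sum.elim id (fun _ => Sum.inl c))

theorem qDepth_subst1 {n : ℕ} (c : A) (f : (L.sum (unaryLang k)).BoundedFormula (A ⊕ Fin n) 1) :
    qDepth (subst1 c f) = qDepth f := by
  rw [subst1, qDepth_formula_relabel, qDepth_toFormula]

theorem realize_subst1 {n : ℕ} (c : A) (f : (L.sum (unaryLang k)).BoundedFormula (A ⊕ Fin n) 1)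
    (b : Fin n → N) :
    Formula.Realize (subst1 c f) (Sum.elim Subtype.val b) ↔
      f.Realize (Sum.elim Subtype.val b) (fun _ => (c : N)) := by
  rw [subst1, Formula.realize_relabel, BoundedFormula.realize_toFormula]
  set g : ((A ⊕ Fin n) ⊕ Fin 1) → (A ⊕ Fin n) :=
    Sum.elim id (fun _ => Sum.inl c) with hg
  have h1 : ((Sum.elim (Subtype.val : A → N) b) ∘ g) ∘
      (Sum.inl : (A ⊕ Fin n) → (A ⊕ Fin n) ⊕ Fin 1) = Sum.elim Subtype.val b := by
    funext x
    cases x with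
    | inl x => rfl
    | inr i => rfl
  have h2 : ((Sum.elim (Subtype.val : A → N) b) ∘ g) ∘
      (Sum.inr : Fin 1 → (A ⊕ Fin n) ⊕ Fin 1) = (fun _ : Fin 1 => (c : N)) := by
    funext i
    rfl
  rw [h1, h2]

theorem realize_all_iff {β : Type v} (f : (L.sum (unaryLang k)).BoundedFormula β 1) (v : β → N) :
    Formula.Realize f.all v ↔ ∀ x : N, f.Realize v (fun _ => x) := by
  rw [Formula.Realize, BoundedFormula.realize_all]
  refine forall_congr' fun x => ?_
  have h : (Fin.snoc (default : Fin 0 → N) x) = fun _ : Fin 1 => x := by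
    funext i
    simp [Fin.snoc]
  rw [h]

theorem realize_equal_iff {n : ℕ} (t₁ t₂ : (L.sum (unaryLang k)).Term ((A ⊕ Fin n) ⊕ Fin 0))
    (v : (A ⊕ Fin n) → N) :
    Formula.Realize (BoundedFormula.equal t₁ t₂) v ↔
      Formula.Realize (Term.equal (downTerm t₁) (downTerm t₂)) v := by
  have e1 := realize_downTerm t₁ v default
  have e2 := realize_downTerm t₂ v default
  rw [Formula.realize_equal, ← e1, ← e2]
  exact Iff.rfl

theorem realize_rel_inl {m n : ℕ} (r : L.Relations m)
    (ts : Fin m → (L.sum (unaryLang k)).Term ((A ⊕ Fin n) ⊕ Fin 0)) (v : (A ⊕ Fin n) → N) :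
    Formula.Realize (BoundedFormula.rel (Sum.inl r : (L.sum (unaryLang k)).Relations m) ts) v ↔
      Formula.Realize (Relations.formula r (fun i => downTerm (ts i))) v := by
  have e : (fun i => Term.realize (Sum.elim v (default : Fin 0 → N)) (ts i)) =
      fun i => (downTerm (ts i)).realize v := funext fun i => realize_downTerm _ _ _
  rw [Formula.realize_rel]
  unfold Formula.Realize
  have lhs : (BoundedFormula.rel (Sum.inl r : (L.sum (unaryLang k)).Relations m) ts).Realize v
      (default : Fin 0 → N) ↔ @Structure.RelMap (L.sum (unaryLang k)) N _ m (Sum.inl r)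
      (fun i => Term.realize (Sum.elim v default) (ts i)) := Iff.rfl
  rw [lhs, relMap_sumInl, e]

theorem realize_rel_inr {n : ℕ} (u : (unaryLang k).Relations 1)
    (ts : Fin 1 → (L.sum (unaryLang k)).Term ((A ⊕ Fin n) ⊕ Fin 0)) (v : (A ⊕ Fin n) → N) :
    Formula.Realize (BoundedFormula.rel (Sum.inr u : (L.sum (unaryLang k)).Relations 1) ts) v ↔
      ULift.up.{u} (u : Fin k) ∈ upat k ((downTerm (ts 0)).realize v) := by
  have e : (fun i : Fin 1 => Term.realize (Sum.elim v (default : Fin 0 → N)) (ts i)) =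
      fun _ : Fin 1 => (downTerm (ts 0)).realize v := by
    funext i
    rw [Subsingleton.elim i 0]
    exact realize_downTerm _ _ _
  unfold Formula.Realize
  have lhs : (BoundedFormula.rel (Sum.inr u : (L.sum (unaryLang k)).Relations 1) ts).Realize v
      (default : Fin 0 → N) ↔ @Structure.RelMap (L.sum (unaryLang k)) N _ 1 (Sum.inr u)
      (fun i => Term.realize (Sum.elim v default) (ts i)) := Iff.rfl
  rw [lhs, relMap_sumInr, e]
  exact Iff.rfl

theorem realize_var_last {n : ℕ} (b : Fin n → N) (c : N) :
    Term.realize (L := L) (M := N) (Sum.elim (Subtype.val : A → N) (Fin.snoc b c))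
      (Term.var (Sum.inr (Fin.last n))) = c := by
  show Fin.snoc (α := fun _ => N) b c (Fin.last n) = c
  simp

set_option maxHeartbeats 1000000 in
/-- Tuples with equal depth-`d` invariants satisfy the same formulas of
quantifier depth at most `d`. -/
theorem main_det : ∀ (d : ℕ) {n : ℕ} (a a' : Fin n → N), (∀ i, a i ∉ A) → (∀ i, a' i ∉ A) →
    inv (L := L) k A d a = inv k A d a' →
    ∀ (φ : (L.sum (unaryLang k)).Formula (A ⊕ Fin n)), qDepth φ ≤ d →
    (Formula.Realize φ (Sum.elim Subtype.val a) ↔ Formula.Realize φ (Sum.elim Subtype.val a'))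
  | d, n, a, a', ha, ha', hinv, BoundedFormula.falsum, _ => Iff.rfl
  | d, n, a, a', ha, ha', hinv, BoundedFormula.equal t₁ t₂, _ => by
      have h00 : inv (L := L) k A 0 a = inv k A 0 a' := inv_mono (Nat.zero_le d) hinv
      have h01 : (⟨n, tpSet (L := L) A a⟩ : SG L A) = ⟨n, tpSet A a'⟩ := congrArg Prod.fst h00
      have h0 : tpSet (L := L) A a = tpSet A a' := sigma_mk_snd h01
      rw [realize_equal_iff t₁ t₂ (Sum.elim Subtype.val a),
        realize_equal_iff t₁ t₂ (Sum.elim Subtype.val a')]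
      exact Set.ext_iff.mp h0 (Term.equal (downTerm t₁) (downTerm t₂))
  | d, n, a, a', ha, ha', hinv, @BoundedFormula.rel _ _ _ m R ts, _ => by
      have h00 : inv (L := L) k A 0 a = inv k A 0 a' := inv_mono (Nat.zero_le d) hinv
      have h01 : (⟨n, tpSet (L := L) A a⟩ : SG L A) = ⟨n, tpSet A a'⟩ := congrArg Prod.fst h00
      have htp : tpSet (L := L) A a = tpSet A a' := sigma_mk_snd h01
      rcases R with r | u
      · rw [realize_rel_inl r ts (Sum.elim Subtype.val a),
          realize_rel_inl r ts (Sum.elim Subtype.val a')]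
        exact Set.ext_iff.mp htp (Relations.formula r fun i => downTerm (ts i))
      · match m, u, ts with
        | 0, u, _ => exact Empty.elim u
        | m + 2, u, _ => exact Empty.elim u
        | 1, u, ts =>
          rw [realize_rel_inr u ts (Sum.elim Subtype.val a),
            realize_rel_inr u ts (Sum.elim Subtype.val a')]
          by_cases hc : Term.realize (Sum.elim Subtype.val a) (downTerm (ts 0)) ∈ A
          · have hθ : Formula.Realize
                (Term.equal (downTerm (ts 0)) (Term.var (Sum.inl (⟨_, hc⟩ : A))))
                (Sum.elim Subtype.val a) := by
              rw [Formula.realize_equal]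
              rfl
            have hθ'' : Formula.Realize
                (Term.equal (downTerm (ts 0)) (Term.var (Sum.inl (⟨_, hc⟩ : A))))
                (Sum.elim Subtype.val a') :=
              (Set.ext_iff.mp htp
                (Term.equal (downTerm (ts 0)) (Term.var (Sum.inl (⟨_, hc⟩ : A))))).mp hθ
            rw [Formula.realize_equal] at hθ''
            have heq : Term.realize (Sum.elim Subtype.val a') (downTerm (ts 0)) =
                Term.realize (Sum.elim Subtype.val a) (downTerm (ts 0)) := hθ''
            rw [heq]
          · have hD : {q | ∃ c, c ∉ A ∧ q = ((⟨n + 1, tpSet (L := L) A (Fin.snoc a c)⟩ : SG L A),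
                  upat k c)} =
                {q | ∃ c, c ∉ A ∧ q = ((⟨n + 1, tpSet (L := L) A (Fin.snoc a' c)⟩ : SG L A),
                  upat k c)} := congrArg Prod.snd h00
            have hmem0 : ((⟨n + 1, tpSet (L := L) A (Fin.snoc a
                  (Term.realize (Sum.elim Subtype.val a) (downTerm (ts 0))))⟩ : SG L A),
                upat k (Term.realize (Sum.elim Subtype.val a) (downTerm (ts 0)))) ∈
                {q | ∃ c, c ∉ A ∧ q = ((⟨n + 1, tpSet (L := L) A (Fin.snoc a c)⟩ : SG L A),
                  upat k c)} := ⟨_, hc, rfl⟩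
            rw [hD] at hmem0
            obtain ⟨e, he, heq⟩ := hmem0
            have hfst : (⟨n + 1, tpSet (L := L) A (Fin.snoc a
                (Term.realize (Sum.elim Subtype.val a) (downTerm (ts 0))))⟩ : SG L A) =
                ⟨n + 1, tpSet A (Fin.snoc a' e)⟩ := congrArg Prod.fst heq
            have htp2 : tpSet (L := L) A (Fin.snoc a
                (Term.realize (Sum.elim Subtype.val a) (downTerm (ts 0)))) =
                tpSet A (Fin.snoc a' e) := sigma_mk_snd hfst
            have hup : upat k (Term.realize (Sum.elim Subtype.val a) (downTerm (ts 0))) =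
                upat k e := congrArg Prod.snd heq
            have hθ : Formula.Realize
                (Term.equal (liftTerm (downTerm (ts 0))) (Term.var (Sum.inr (Fin.last n))))
                (Sum.elim Subtype.val (Fin.snoc a
                  (Term.realize (Sum.elim Subtype.val a) (downTerm (ts 0))))) := by
              rw [Formula.realize_equal, realize_liftTerm, realize_var_last]
            have hθ'' : Formula.Realize
                (Term.equal (liftTerm (downTerm (ts 0))) (Term.var (Sum.inr (Fin.last n))))
                (Sum.elim Subtype.val (Fin.snoc a' e)) :=
              (Set.ext_iff.mp htp2
                (Term.equal (liftTerm (downTerm (ts 0)))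
                  (Term.var (Sum.inr (Fin.last n))))).mp hθ
            rw [Formula.realize_equal, realize_liftTerm, realize_var_last] at hθ''
            rw [hθ'', hup]
  | d, n, a, a', ha, ha', hinv, BoundedFormula.imp f g, hq => by
      have h1 := main_det d a a' ha ha' hinv f (le_trans (le_max_left _ _) hq)
      have h2 := main_det d a a' ha ha' hinv g (le_trans (le_max_right _ _) hq)
      exact imp_congr h1 h2
  | d, n, a, a', ha, ha', hinv, BoundedFormula.all f, hq => by
      have hd : qDepth f + 1 ≤ d := hq
      obtain ⟨e, rfl⟩ : ∃ e, d = e + 1 := ⟨d - 1, by omega⟩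
      rw [realize_all_iff, realize_all_iff]
      have key : ∀ (b b' : Fin n → N), (∀ i, b i ∉ A) → (∀ i, b' i ∉ A) →
          inv (L := L) k A (e + 1) b = inv k A (e + 1) b' →
          (∀ x : N, f.Realize (Sum.elim Subtype.val b) (fun _ => x)) →
          ∀ x : N, f.Realize (Sum.elim Subtype.val b') (fun _ => x) := by
        intro b b' hb hb' hbinv H x
        by_cases hx : x ∈ A
        · have h1 := main_det (qDepth f) b b' hb hb'
            (inv_mono (by omega) hbinv) (subst1 ⟨x, hx⟩ f)
            (le_of_eq (qDepth_subst1 _ _))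
          have h2 := (realize_subst1 ⟨x, hx⟩ f b).mpr (H x)
          exact (realize_subst1 ⟨x, hx⟩ f b').mp (h1.mp h2)
        · have hDD := congrArg Prod.snd hbinv
          have hmem : inv (L := L) k A e (Fin.snoc b' x) ∈
              {t | ∃ c, c ∉ A ∧ t = inv (L := L) k A e (Fin.snoc b c)} := by
            rw [show {t | ∃ c, c ∉ A ∧ t = inv (L := L) k A e (Fin.snoc b c)} =
              {t | ∃ c, c ∉ A ∧ t = inv (L := L) k A e (Fin.snoc b' c)} from hDD]
            exact ⟨x, hx, rfl⟩
          obtain ⟨cc, hcc, hceq⟩ := hmem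
          have h1 := main_det (qDepth f) (Fin.snoc b cc) (Fin.snoc b' x)
            (snoc_notin hb hcc) (snoc_notin hb' hx)
            (inv_mono (by omega) hceq.symm) (lift1 f) (le_of_eq (qDepth_lift1 f))
          have h2 := (realize_lift1 f b cc).mpr (H cc)
          exact (realize_lift1 f b' x).mp (h1.mp h2)
      exact ⟨fun H x => key a a' ha ha' hinv H x, fun H x => key a' a ha' ha hinv.symm H x⟩
termination_by d n a a' _ _ _ φ _ => (d, sizeOf φ)

/-- The classifying map into all invariants determines the sum-language type. -/
theorem TP_sum_det (p q : Tup N A)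
    (h : ∀ d, inv (L := L) k A d p.2.1 = inv k A d q.2.1) :
    TP (L.sum (unaryLang k)) A p = TP (L.sum (unaryLang k)) A q := by
  obtain ⟨n, a, ha⟩ := p
  obtain ⟨n', a', ha'⟩ := q
  have hfst : (⟨n, tpSet (L := L) A a⟩ : SG L A) = ⟨n', tpSet A a'⟩ :=
    congrArg Prod.fst (h 0)
  have hn : n = n' := congrArg Sigma.fst hfst
  subst hn
  show (⟨n, tpSet (L := L.sum (unaryLang k)) A a⟩ : SG (L.sum (unaryLang k)) A) =
    ⟨n, tpSet (L := L.sum (unaryLang k)) A a'⟩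
  apply congrArg (Sigma.mk n)
  ext φ
  exact main_det (qDepth φ) a a' ha ha' (h (qDepth φ)) φ le_rfl

/-- The depth-`d` invariant, as a map on tuples. -/
def invMap (d : ℕ) : Tup N A → TInv L A k d := fun p => inv k A d p.2.1

theorem rtp_le_prod :
    rtp (L.sum (unaryLang k)) N A ≤
      Cardinal.prod (fun d : ℕ => #(Set.range (invMap (L := L) (k := k) (A := A) d))) := by
  rw [rtp_eq]
  have step1 : #(Set.range (TP (L.sum (unaryLang k)) A)) ≤
      #(Set.range (fun p : Tup N A => fun d : ℕ => inv (L := L) k A d p.2.1)) := by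
    set F := TP (L.sum (unaryLang k)) A with hF
    set G := fun p : Tup N A => fun d : ℕ => inv (L := L) k A d p.2.1 with hG
    have hdet : ∀ p q, G p = G q → F p = F q := fun p q h =>
      TP_sum_det p q (fun d => congrFun h d)
    have hsurj : Function.Surjective (fun y : Set.range G =>
        (⟨F (Classical.choose y.2), Set.mem_range_self _⟩ : Set.range F)) := by
      rintro ⟨z, p, rfl⟩
      refine ⟨⟨G p, Set.mem_range_self p⟩, ?_⟩
      have hch := Classical.choose_spec (⟨p, rfl⟩ : ∃ x, G x = G p)
      exact Subtype.ext (hdet _ _ hch)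
    exact Cardinal.mk_le_of_surjective hsurj
  have step2 : #(Set.range (fun p : Tup N A => fun d : ℕ => inv (L := L) k A d p.2.1)) ≤
      Cardinal.prod (fun d : ℕ => #(Set.range (invMap (L := L) (k := k) (A := A) d))) := by
    rw [← Cardinal.mk_pi]
    have hinj : Function.Injective
        (fun y : Set.range (fun p : Tup N A => fun d : ℕ => inv (L := L) k A d p.2.1) =>
          (fun d => (⟨y.1 d, by
            obtain ⟨p, hp⟩ := y.2
            exact ⟨p, congrFun hp d⟩⟩ : Set.range (invMap (L := L) (k := k) (A := A) d)))) := by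
      intro y z h
      apply Subtype.ext
      funext d
      exact congrArg Subtype.val (congrFun h d)
    exact Cardinal.mk_le_of_injective hinj
  exact step1.trans step2

theorem inv0_fst_mem (x : Set.range (invMap (L := L) (k := k) (A := A) 0)) :
    x.1.1 ∈ Set.range (TP L A) := by
  obtain ⟨⟨n, a, ha⟩, hp⟩ := x.2
  exact ⟨⟨n, a, ha⟩, by rw [← hp]; rfl⟩

theorem inv0_snd_mem {x : TInv L A k 0} (hx : x ∈ Set.range (invMap (L := L) (k := k) (A := A) 0)) :
    ∀ z ∈ x.2, z.1 ∈ Set.range (TP L A) := by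
  obtain ⟨⟨n, a, ha⟩, hp⟩ := hx
  subst hp
  intro z hz
  have hz' : ∃ c, c ∉ A ∧ z = ((⟨n + 1, tpSet (L := L) A (Fin.snoc a c)⟩ : SG L A),
    upat k c) := hz
  obtain ⟨c, hc, rfl⟩ := hz'
  exact ⟨⟨n + 1, Fin.snoc a c, snoc_notin ha hc⟩, rfl⟩

theorem rho0_le : #(Set.range (invMap (L := L) (k := k) (A := A) 0)) ≤
    #(Set.range (TP L A)) * 2 ^ (#(Set.range (TP L A)) * 2 ^ (k : Cardinal.{u})) := by
  have key : #(Set.range (invMap (L := L) (k := k) (A := A) 0)) ≤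
      #((Set.range (TP L A)) ×
        Set ((Set.range (TP L A)) × Set (ULift.{u} (Fin k)))) := by
    have hinj : Function.Injective (fun x : Set.range (invMap (L := L) (k := k) (A := A) 0) =>
        ((⟨x.1.1, inv0_fst_mem x⟩ : Set.range (TP L A)),
          {q : (Set.range (TP L A)) × Set (ULift.{u} (Fin k)) | (q.1.1, q.2) ∈ x.1.2})) := by
      intro x y h
      have h1 : x.1.1 = y.1.1 := congrArg (fun z => (Prod.fst z).1) h
      have h2 : {q : (Set.range (TP L A)) × Set (ULift.{u} (Fin k)) | (q.1.1, q.2) ∈ x.1.2} =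
          {q : (Set.range (TP L A)) × Set (ULift.{u} (Fin k)) | (q.1.1, q.2) ∈ y.1.2} :=
        congrArg Prod.snd h
      apply Subtype.ext
      apply Prod.ext h1
      ext z
      constructor
      · intro hz
        have hmem := inv0_snd_mem x.2 z hz
        have : ((⟨z.1, hmem⟩ : Set.range (TP L A)), z.2) ∈
            {q : (Set.range (TP L A)) × Set (ULift.{u} (Fin k)) | (q.1.1, q.2) ∈ x.1.2} := hz
        rw [h2] at this
        exact this
      · intro hz
        have hmem := inv0_snd_mem y.2 z hz
        have : ((⟨z.1, hmem⟩ : Set.range (TP L A)), z.2) ∈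
            {q : (Set.range (TP L A)) × Set (ULift.{u} (Fin k)) | (q.1.1, q.2) ∈ y.1.2} := hz
        rw [← h2] at this
        exact this
    exact Cardinal.mk_le_of_injective hinj
  refine key.trans (le_of_eq ?_)
  simp [Cardinal.mk_prod, Cardinal.mk_set, Cardinal.mk_uLift, Cardinal.mk_fin, mul_comm]

theorem invS_fst_mem (d : ℕ) (x : Set.range (invMap (L := L) (k := k) (A := A) (d + 1))) :
    x.1.1 ∈ Set.range (invMap (L := L) (k := k) (A := A) d) := by
  obtain ⟨⟨n, a, ha⟩, hp⟩ := x.2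
  exact ⟨⟨n, a, ha⟩, by rw [← hp]; rfl⟩

theorem invS_snd_mem (d : ℕ) {x : TInv L A k (d + 1)}
    (hx : x ∈ Set.range (invMap (L := L) (k := k) (A := A) (d + 1))) :
    ∀ z ∈ x.2, z ∈ Set.range (invMap (L := L) (k := k) (A := A) d) := by
  obtain ⟨⟨n, a, ha⟩, hp⟩ := hx
  subst hp
  intro z hz
  have hz' : ∃ c, c ∉ A ∧ z = inv (L := L) k A d (Fin.snoc a c) := hz
  obtain ⟨c, hc, rfl⟩ := hz'
  exact ⟨⟨n + 1, Fin.snoc a c, snoc_notin ha hc⟩, rfl⟩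

theorem rhoS_le (d : ℕ) : #(Set.range (invMap (L := L) (k := k) (A := A) (d + 1))) ≤
    #(Set.range (invMap (L := L) (k := k) (A := A) d)) *
      2 ^ #(Set.range (invMap (L := L) (k := k) (A := A) d)) := by
  have key : #(Set.range (invMap (L := L) (k := k) (A := A) (d + 1))) ≤
      #((Set.range (invMap (L := L) (k := k) (A := A) d)) ×
        Set (Set.range (invMap (L := L) (k := k) (A := A) d))) := by
    have hinj : Function.Injective
        (fun x : Set.range (invMap (L := L) (k := k) (A := A) (d + 1)) =>
        ((⟨x.1.1, invS_fst_mem d x⟩ : Set.range (invMap (L := L) (k := k) (A := A) d)),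
          {q : Set.range (invMap (L := L) (k := k) (A := A) d) | q.1 ∈ x.1.2})) := by
      intro x y h
      have h1 : x.1.1 = y.1.1 := congrArg (fun z => (Prod.fst z).1) h
      have h2 : {q : Set.range (invMap (L := L) (k := k) (A := A) d) | q.1 ∈ x.1.2} =
          {q : Set.range (invMap (L := L) (k := k) (A := A) d) | q.1 ∈ y.1.2} :=
        congrArg Prod.snd h
      apply Subtype.ext
      apply Prod.ext h1
      ext z
      constructor
      · intro hz
        have hmem := invS_snd_mem d x.2 z hz
        have : (⟨z, hmem⟩ : Set.range (invMap (L := L) (k := k) (A := A) d)) ∈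
            {q : Set.range (invMap (L := L) (k := k) (A := A) d) | q.1 ∈ x.1.2} := hz
        rw [h2] at this
        exact this
      · intro hz
        have hmem := invS_snd_mem d y.2 z hz
        have : (⟨z, hmem⟩ : Set.range (invMap (L := L) (k := k) (A := A) d)) ∈
            {q : Set.range (invMap (L := L) (k := k) (A := A) d) | q.1 ∈ y.1.2} := hz
        rw [← h2] at this
        exact this
    exact Cardinal.mk_le_of_injective hinj
  refine key.trans (le_of_eq ?_)
  simp [Cardinal.mk_prod, Cardinal.mk_set]

/-! ### Cardinal arithmetic assembly -/

theorem one_le_rtp : 1 ≤ rtp L N A := by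
  rw [rtp_eq, Cardinal.one_le_iff_ne_zero, Cardinal.mk_ne_zero_iff]
  exact ⟨TP L A ⟨0, fun i => i.elim0, fun i => i.elim0⟩, Set.mem_range_self _⟩

theorem nat_le_iterPow {κ : Cardinal.{u}} (n : ℕ) : (n : Cardinal.{u}) ≤ iterPow κ n := by
  induction n with
  | zero => simp [iterPow]
  | succ n ih =>
      have h : (n : Cardinal.{u}) < iterPow κ (n + 1) :=
        lt_of_le_of_lt ih (Cardinal.cantor _)
      rw [show ((n + 1 : ℕ) : Cardinal.{u}) = Order.succ (n : Cardinal.{u}) from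
        Cardinal.nat_succ n]
      exact Order.succ_le_of_lt h

theorem aleph0_le_S {κ : Cardinal.{u}} : ℵ₀ ≤ ⨆ n : ℕ, iterPow κ n :=
  Cardinal.aleph0_le.2 fun n =>
    (nat_le_iterPow n).trans (le_ciSup (Cardinal.bddAbove_range _) n)

theorem iter_le_S {κ : Cardinal.{u}} (n : ℕ) : iterPow κ n ≤ ⨆ n : ℕ, iterPow κ n :=
  le_ciSup (Cardinal.bddAbove_range _) n

theorem two_lt_aleph0 : (2 : Cardinal.{u}) < ℵ₀ := by
  rw [Cardinal.lt_aleph0]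
  exact ⟨2, by norm_num⟩

theorem rho_le_S (d : ℕ) : #(Set.range (invMap (L := L) (k := k) (A := A) d)) ≤
    ⨆ n : ℕ, iterPow (rtp L N A) n := by
  set κ := rtp L N A with hκdef
  have hκ : #(Set.range (TP L A)) = κ := (rtp_eq L N A).symm
  by_cases hfin : κ < ℵ₀
  · have key : ∀ e : ℕ, #(Set.range (invMap (L := L) (k := k) (A := A) e)) < ℵ₀ := by
      intro e
      induction e with
      | zero =>
          refine lt_of_le_of_lt rho0_le ?_
          rw [hκ]
          exact Cardinal.mul_lt_aleph0 hfin (Cardinal.power_lt_aleph0 two_lt_aleph0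
            (Cardinal.mul_lt_aleph0 hfin
              (Cardinal.power_lt_aleph0 two_lt_aleph0 (Cardinal.nat_lt_aleph0 k))))
      | succ e ih =>
          refine lt_of_le_of_lt (rhoS_le e) ?_
          exact Cardinal.mul_lt_aleph0 ih (Cardinal.power_lt_aleph0 two_lt_aleph0 ih)
    exact (key d).le.trans aleph0_le_S
  · push_neg at hfin
    have hinf : ∀ n : ℕ, ℵ₀ ≤ iterPow κ n := by
      intro n
      induction n with
      | zero => exact hfin
      | succ n ih => exact ih.trans (Cardinal.cantor _).le
    have bound : ∀ e : ℕ, #(Set.range (invMap (L := L) (k := k) (A := A) e)) ≤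
        iterPow κ (e + 1) := by
      intro e
      induction e with
      | zero =>
          refine rho0_le.trans ?_
          rw [hκ]
          have h2k : (2 : Cardinal.{u}) ^ (k : Cardinal.{u}) ≤ ℵ₀ :=
            (Cardinal.power_lt_aleph0 two_lt_aleph0 (Cardinal.nat_lt_aleph0 k)).le
          have hk2 : κ * 2 ^ (k : Cardinal.{u}) ≤ κ := by
            refine le_trans (mul_le_mul_right h2k κ) ?_
            rw [Cardinal.mul_aleph0_eq hfin]
          have step1 : κ * 2 ^ (κ * 2 ^ (k : Cardinal.{u})) ≤ 2 ^ κ * 2 ^ κ :=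
            mul_le_mul' (Cardinal.cantor κ).le
              (Cardinal.power_le_power_left two_ne_zero hk2)
          refine step1.trans ?_
          rw [← Cardinal.power_add, Cardinal.add_eq_self hfin]
          rfl
      | succ e ih =>
          refine (rhoS_le e).trans ?_
          have step1 : #(Set.range (invMap (L := L) (k := k) (A := A) e)) *
              2 ^ #(Set.range (invMap (L := L) (k := k) (A := A) e)) ≤
              2 ^ iterPow κ (e + 1) * 2 ^ iterPow κ (e + 1) :=
            mul_le_mul' (ih.trans (Cardinal.cantor _).le)
              (Cardinal.power_le_power_left two_ne_zero ih)
          refine step1.trans ?_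
          rw [← Cardinal.power_add, Cardinal.add_eq_self (hinf (e + 1))]
          rfl
    exact (bound d).trans (iter_le_S (d + 1))

theorem rtp_sum_le : rtp (L.sum (unaryLang k)) N A ≤ bethOmega1 (rtp L N A) := by
  set κ := rtp L N A with hκdef
  set S := ⨆ n : ℕ, iterPow κ n with hSdef
  have hS : ℵ₀ ≤ S := aleph0_le_S
  refine le_trans rtp_le_prod ?_
  have h1 : Cardinal.prod (fun d : ℕ => #(Set.range (invMap (L := L) (k := k) (A := A) d))) ≤
      Cardinal.prod (fun _ : ℕ => S) :=
    Cardinal.prod_le_prod _ _ fun d => rho_le_S d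
  refine h1.trans ?_
  have h2 : Cardinal.prod (fun _ : ℕ => S) = S ^ (ℵ₀ : Cardinal.{u}) := by
    rw [Cardinal.prod_const]
    simp
  rw [h2]
  have h3 : S ^ (ℵ₀ : Cardinal.{u}) ≤ (2 ^ S) ^ (ℵ₀ : Cardinal.{u}) :=
    Cardinal.power_le_power_right (Cardinal.cantor S).le
  refine h3.trans ?_
  rw [← Cardinal.power_mul, Cardinal.mul_aleph0_eq hS]
  exact le_rfl

end Main


/-- For `N⁺` the expansion of `N` by `k` unary predicates,
`rtp(N⁺, A) ≤ ℶ_{ω+1}(rtp(N, A))`. -/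
theorem statement18 {L : FirstOrder.Language.{u, u}} {N : Type u} [inst : L.Structure N]
    (k : ℕ) (U : Fin k → Set N) (A : Set N) :
    @rtp (L.sum (unaryLang k)) N
        (@FirstOrder.Language.sumStructure L (unaryLang k) N inst (unaryStructure k U)) A ≤
      bethOmega1 (rtp L N A) := by
  letI : (unaryLang k).Structure N := unaryStructure k U
  exact rtp_sum_le

end MonadicNIP
end

section
/- Suppose Age(M), the class of finite substructures of M, is (n+1)-wqo. Then for any expansion M* of M by finitely many constants, Age(M*) is n-wqo. -/
open FirstOrder FirstOrder.Language Cardinal Set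

universe u v w

namespace MonadicNIP

variable {L : FirstOrder.Language.{u, u}} {C : Type u} [L.Structure C]

/-- The language consisting of `m` constant symbols. -/
def constLang (m : ℕ) : FirstOrder.Language.{0, 0} :=
  ⟨fun n => match n with | 0 => Fin m | _ => Empty, fun _ => Empty⟩

/-- The structure on `N` interpreting the `m` constants as `c i`. -/
def constStructure {N : Type u} (m : ℕ) (c : Fin m → N) :
    (constLang m).Structure N where
  funMap := fun {n} f x => match n, f with
    | 0, i => c i
  RelMap := fun r _ => r.elim

/-- `Age(M)` is well-quasi-ordered under embeddability: there is no infinite antichain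
of finite substructures of `M`. -/
def AgeWqo (L : FirstOrder.Language.{u, u}) (M : Type u) [L.Structure M] : Prop :=
  ¬ ∃ S : ℕ → L.Substructure M, (∀ i, (S i : Set M).Finite) ∧
      ∀ i j : ℕ, i ≠ j → IsEmpty ((S i) ↪[L] (S j))

/-- `Age(M)` is `n`-wqo: for every expansion of `M` by `n` unary predicates
partitioning the universe, the age of the expansion is wqo. -/
def AgeNWqo (L : FirstOrder.Language.{u, u}) (M : Type u) [inst : L.Structure M]
    (n : ℕ) : Prop :=
  ∀ U : Fin n → Set M, (∀ x : M, ∃! i, x ∈ U i) →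
    @AgeWqo (L.sum (unaryLang n)) M
      (@FirstOrder.Language.sumStructure L (unaryLang n) M inst (unaryStructure n U))


/-! ### Auxiliary lemmas: infinite Ramsey theorem for pairs -/

private theorem exists_infinite_fiber {κ : Type*} [Finite κ] (f : ℕ → κ) (X : Set ℕ)
    (hX : X.Infinite) : ∃ k, {i | i ∈ X ∧ f i = k}.Infinite := by
  by_contra hcon
  push_neg at hcon
  refine hX ?_
  have hXeq : X = ⋃ k, {i | i ∈ X ∧ f i = k} := by
    ext i
    constructor
    · intro hi
      exact Set.mem_iUnion.2 ⟨f i, hi, rfl⟩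
    · intro hi
      rcases Set.mem_iUnion.1 hi with ⟨k, hk, -⟩
      exact hk
  rw [hXeq]
  exact Set.finite_iUnion hcon

private def RInv {κ : Type*} (χ : ℕ → ℕ → κ) (p : ℕ × Set ℕ) : Prop :=
  p.2.Infinite ∧ (∀ y ∈ p.2, p.1 < y) ∧ ∀ y ∈ p.2, ∀ z ∈ p.2, χ p.1 y = χ p.1 z

private theorem rstep {κ : Type*} [Finite κ] (χ : ℕ → ℕ → κ) (a : ℕ) (X : Set ℕ)
    (hX : X.Infinite) : ∃ Y : Set ℕ, Y ⊆ X ∧ RInv χ (a, Y) := by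
  obtain ⟨k, hk⟩ := exists_infinite_fiber (χ a) (X \ Set.Iic a) (hX.diff (Set.finite_Iic a))
  refine ⟨{i | i ∈ X \ Set.Iic a ∧ χ a i = k}, fun y hy => hy.1.1, hk, fun y hy => ?_,
    fun y hy z hz => ?_⟩
  · exact not_le.1 hy.1.2
  · rw [hy.2, hz.2]

private noncomputable def rnext {κ : Type*} [Finite κ] (χ : ℕ → ℕ → κ)
    (s : {p : ℕ × Set ℕ // RInv χ p}) : {p : ℕ × Set ℕ // RInv χ p} :=
  ⟨(sInf s.1.2, (rstep χ (sInf s.1.2) s.1.2 s.2.1).choose),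
    (rstep χ (sInf s.1.2) s.1.2 s.2.1).choose_spec.2⟩

private theorem rnext_fst_mem {κ : Type*} [Finite κ] (χ : ℕ → ℕ → κ)
    (s : {p : ℕ × Set ℕ // RInv χ p}) : (rnext χ s).1.1 ∈ s.1.2 :=
  Nat.sInf_mem s.2.1.nonempty

private theorem rnext_snd_sub {κ : Type*} [Finite κ] (χ : ℕ → ℕ → κ)
    (s : {p : ℕ × Set ℕ // RInv χ p}) : (rnext χ s).1.2 ⊆ s.1.2 :=
  (rstep χ (sInf s.1.2) s.1.2 s.2.1).choose_spec.1

private theorem ramsey_pairs {κ : Type*} [Finite κ] (χ : ℕ → ℕ → κ) :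
    ∃ e : ℕ → ℕ, StrictMono e ∧ ∃ k, ∀ i j, i < j → χ (e i) (e j) = k := by
  classical
  obtain ⟨Y0, -, hY0⟩ := rstep χ 0 Set.univ Set.infinite_univ
  set s : ℕ → {p : ℕ × Set ℕ // RInv χ p} := fun i => (rnext χ)^[i] ⟨(0, Y0), hY0⟩ with hs
  set a : ℕ → ℕ := fun i => (s (i + 1)).1.1 with ha
  have hsucc : ∀ i, s (i + 1) = rnext χ (s i) := fun i => Function.iterate_succ_apply' _ _ _
  have hmem : ∀ i, a i ∈ (s i).1.2 := by
    intro i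
    have h1 := rnext_fst_mem χ (s i)
    rwa [← hsucc i] at h1
  have hsub : ∀ i, (s (i + 1)).1.2 ⊆ (s i).1.2 := by
    intro i
    have h1 := rnext_snd_sub χ (s i)
    rwa [← hsucc i] at h1
  have hsub' : ∀ i j, i ≤ j → (s j).1.2 ⊆ (s i).1.2 := by
    intro i j hij
    induction j, hij using Nat.le_induction with
    | base => exact fun _ hx => hx
    | succ j hij ih => exact fun x hx => ih (hsub j hx)
  have hmem' : ∀ i j, i < j → a j ∈ (s (i + 1)).1.2 := fun i j hij =>
    hsub' (i + 1) j hij (hmem j)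
  have hamono : StrictMono a := by
    refine strictMono_nat_of_lt_succ fun i => ?_
    exact (s (i + 1)).2.2.1 _ (hmem' i (i + 1) (Nat.lt_succ_self i))
  have key : ∀ i j, i < j → χ (a i) (a j) = χ (a i) (a (i + 1)) := fun i j hij =>
    (s (i + 1)).2.2.2 _ (hmem' i j hij) _ (hmem (i + 1))
  obtain ⟨k, hk⟩ := exists_infinite_fiber (fun i => χ (a i) (a (i + 1))) Set.univ
    Set.infinite_univ
  have hp : {i | χ (a i) (a (i + 1)) = k}.Infinite :=
    hk.mono fun i hi => hi.2
  refine ⟨fun t => a (Nat.nth (fun i => χ (a i) (a (i + 1)) = k) t),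
    hamono.comp (Nat.nth_strictMono hp), k, fun i j hij => ?_⟩
  rw [key _ _ (Nat.nth_strictMono hp hij)]
  exact Nat.nth_mem_of_infinite hp i

/-! ### Auxiliary notions: restrictions of embeddings to a fixed finite set -/

private def IsRes {L : FirstOrder.Language.{u, u}} {M : Type u} [L.Structure M] (rc : Set M)
    (Ti Tj : L.Substructure M) (G : ↥rc → ↥rc) : Prop :=
  ∃ F : Ti ↪[L] Tj, ∀ (x : M) (hx : x ∈ rc) (hx' : x ∈ Ti),
    ((F ⟨x, hx'⟩ : Tj) : M) = ↑(G ⟨x, hx⟩)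

private theorem IsRes.comp {L : FirstOrder.Language.{u, u}} {M : Type u} [L.Structure M]
    {rc : Set M} {T1 T2 T3 : L.Substructure M} (h2 : rc ⊆ (T2 : Set M)) {G G' : ↥rc → ↥rc}
    (hG : IsRes rc T1 T2 G) (hG' : IsRes rc T2 T3 G') : IsRes rc T1 T3 (G' ∘ G) := by
  obtain ⟨F, hF⟩ := hG
  obtain ⟨F', hF'⟩ := hG'
  refine ⟨F'.comp F, fun x hx hx' => ?_⟩
  have h1 : F ⟨x, hx'⟩ = ⟨↑(G ⟨x, hx⟩), h2 (G ⟨x, hx⟩).2⟩ := Subtype.ext (hF x hx hx')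
  calc ((F'.comp F) ⟨x, hx'⟩ : M) = ↑(F' (F ⟨x, hx'⟩)) := rfl
    _ = ↑(F' ⟨↑(G ⟨x, hx⟩), h2 (G ⟨x, hx⟩).2⟩) := by rw [h1]
    _ = ↑(G' (G ⟨x, hx⟩)) := hF' _ (G ⟨x, hx⟩).2 _

private theorem IsRes.injG {L : FirstOrder.Language.{u, u}} {M : Type u} [L.Structure M]
    {rc : Set M} {T1 T2 : L.Substructure M} (h1 : rc ⊆ (T1 : Set M)) {G : ↥rc → ↥rc}
    (hG : IsRes rc T1 T2 G) : Function.Injective G := by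
  obtain ⟨F, hF⟩ := hG
  intro x y hxy
  have hFxy : F ⟨x.1, h1 x.2⟩ = F ⟨y.1, h1 y.2⟩ := by
    refine Subtype.ext ?_
    rw [hF x.1 x.2 (h1 x.2), hF y.1 y.2 (h1 y.2), hxy]
  have h2 := congrArg Subtype.val (F.injective hFxy)
  exact Subtype.ext h2

/-- In a relational language with finitely many constants, if `Age(M)`
is `(n+1)`-wqo, then for any expansion `M*` of `M` by finitely many constants,
`Age(M*)` is `n`-wqo. -/
theorem statement19 {L : FirstOrder.Language.{u, u}} {M : Type u} [inst : L.Structure M]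
    (hrel : ∀ k : ℕ, IsEmpty (L.Functions (k + 1))) (hconst : Finite (L.Functions 0))
    (n m : ℕ) (h : AgeNWqo L M (n + 1)) (c : Fin m → M) :
    @AgeNWqo (L.sum (constLang m)) M
      (@FirstOrder.Language.sumStructure L (constLang m) M inst (constStructure m c))
      n := by
  classical
  intro U hU
  rintro ⟨S, hfin, hanti⟩
  letI scu : ((L.sum (constLang m)).sum (unaryLang n)).Structure M :=
    @FirstOrder.Language.sumStructure (L.sum (constLang m)) (unaryLang n) M
      (@FirstOrder.Language.sumStructure L (constLang m) M inst (constStructure m c))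
      (unaryStructure n U)
  set rc : Set M := Set.range c with hrcdef
  haveI hrcfin : Finite ↥rc := (Set.finite_range c).to_subtype
  set V : Fin (n + 1) → Set M :=
    (fun i => if h : (i : ℕ) < n then U (i.castLT h) \ rc else rc) with hVdef
  have hVlast : V (Fin.last n) = rc := by
    rw [hVdef]
    simp
  have hVcast : ∀ r : Fin n,
      V ⟨(r : ℕ), lt_trans r.2 (Nat.lt_succ_self n)⟩ = U r \ rc := by
    intro r
    rw [hVdef]
    simp only
    rw [dif_pos (show ((⟨(r : ℕ), lt_trans r.2 (Nat.lt_succ_self n)⟩ : Fin (n + 1)) : ℕ) < n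
      from r.2)]
    exact congrArg (fun z => U z \ rc) (Fin.ext rfl)
  have hV : ∀ x : M, ∃! i, x ∈ V i := by
    intro x
    by_cases hx : x ∈ rc
    · refine ⟨Fin.last n, by show x ∈ V (Fin.last n); rw [hVlast]; exact hx, ?_⟩
      intro i hi
      have hi' : x ∈ V i := hi
      by_contra hne
      have hlt : (i : ℕ) < n := by
        rcases lt_or_eq_of_le (Nat.lt_succ_iff.1 i.2) with h' | h'
        · exact h'
        · exact absurd (Fin.ext (h'.trans (Fin.val_last n).symm)) hne
      rw [hVdef] at hi'
      simp only [dif_pos hlt] at hi'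
      exact hi'.2 hx
    · obtain ⟨i0, hi0, huniq⟩ := hU x
      refine ⟨⟨(i0 : ℕ), lt_trans i0.2 (Nat.lt_succ_self n)⟩,
        by show x ∈ V ⟨(i0 : ℕ), lt_trans i0.2 (Nat.lt_succ_self n)⟩
           rw [hVcast]; exact ⟨hi0, hx⟩, ?_⟩
      intro j hj
      have hj' : x ∈ V j := hj
      by_cases hjn : (j : ℕ) < n
      · rw [hVdef] at hj'
        simp only [dif_pos hjn] at hj'
        have h1 := huniq (j.castLT hjn) hj'.1
        have h2 : (j : ℕ) = (i0 : ℕ) := congrArg Fin.val h1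
        exact Fin.ext h2
      · have hj'' : j = Fin.last n :=
          Fin.ext (Nat.le_antisymm (Nat.lt_succ_iff.1 j.2) (le_of_not_gt hjn))
        rw [hj'', hVlast] at hj'
        exact absurd hj' hx
  letI su : (L.sum (unaryLang (n + 1))).Structure M :=
    @FirstOrder.Language.sumStructure L (unaryLang (n + 1)) M inst (unaryStructure (n + 1) V)
  let T : ℕ → @Substructure (L.sum (unaryLang (n + 1))) M su := fun i =>
    { carrier := (S i : Set M)
      fun_mem := by
        intro k f x hx
        rcases f with g | g
        · exact (S i).fun_mem (Sum.inl (Sum.inl g)) x hx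
        · exact g.elim }
  have hrcS : ∀ i : ℕ, rc ⊆ (S i : Set M) := by
    rintro i x ⟨t, rfl⟩
    exact (S i).fun_mem (Sum.inl (Sum.inr (show (constLang m).Functions 0 from t))) (fun j => j.elim0) (fun j => j.elim0)
  have hrcT : ∀ i : ℕ, rc ⊆ (T i : Set M) := fun i => hrcS i
  have hVpres : ∀ (i j : ℕ) (F : ↥(T i) ↪[L.sum (unaryLang (n + 1))] ↥(T j))
      (x : ↥(T i)) (r : Fin (n + 1)), (((F x : ↥(T j)) : M) ∈ V r ↔ ((x : M) ∈ V r)) :=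
    fun i j F x r =>
      F.map_rel' (Sum.inr r : (L.sum (unaryLang (n + 1))).Relations 1) (fun _ => x)
  have hrcpres : ∀ (i j : ℕ) (F : ↥(T i) ↪[L.sum (unaryLang (n + 1))] ↥(T j)) (x : ↥(T i)),
      (((F x : ↥(T j)) : M) ∈ rc ↔ ((x : M) ∈ rc)) := by
    intro i j F x
    have h1 := hVpres i j F x (Fin.last n)
    rwa [hVlast] at h1
  have hGex : ∀ (i j : ℕ) (F : ↥(T i) ↪[L.sum (unaryLang (n + 1))] ↥(T j)),
      ∃ G : ↥rc → ↥rc, IsRes rc (T i) (T j) G := by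
    intro i j F
    refine ⟨fun x => ⟨((F ⟨x.1, hrcS i x.2⟩ : ↥(T j)) : M), ?_⟩, F, fun x hx hx' => rfl⟩
    exact (hrcpres i j F ⟨x.1, hrcS i x.2⟩).2 x.2
  have hid : ∀ i j : ℕ, i ≠ j → ∀ G : ↥rc → ↥rc, IsRes rc (T i) (T j) G →
      (∀ x, G x = x) → False := by
    rintro i j hij G ⟨F, hF⟩ hGid
    have hfix : ∀ (x : M) (hx : x ∈ rc) (hx' : x ∈ T i), ((F ⟨x, hx'⟩ : ↥(T j)) : M) = x := by
      intro x hx hx'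
      rw [hF x hx hx', hGid]
    refine (hanti i j hij).false ?_
    refine ⟨⟨fun x => ⟨((F ⟨x.1, x.2⟩ : ↥(T j)) : M), (F ⟨x.1, x.2⟩).2⟩, ?_⟩, ?_, ?_⟩
    · intro x y hxy
      have h1 : F ⟨x.1, x.2⟩ = F ⟨y.1, y.2⟩ := Subtype.ext (congrArg Subtype.val hxy)
      have h2 := congrArg Subtype.val (F.injective h1)
      exact Subtype.ext h2
    · intro k f x
      match k, f with
      | k, Sum.inl (Sum.inl g) =>
        exact Subtype.ext (congrArg Subtype.val
          (F.map_fun' (Sum.inl g) (fun t => ⟨(x t).1, (x t).2⟩)))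
      | 0, Sum.inl (Sum.inr t) =>
        exact Subtype.ext (hfix (c t) ⟨t, rfl⟩ (hrcS i ⟨t, rfl⟩))
      | k + 1, Sum.inl (Sum.inr t) => exact t.elim
      | k, Sum.inr g => exact g.elim
    · intro k r x
      match k, r with
      | k, Sum.inl (Sum.inl ρ) =>
        exact F.map_rel' (Sum.inl ρ) (fun t => ⟨(x t).1, (x t).2⟩)
      | k, Sum.inl (Sum.inr ρ) => exact ρ.elim
      | 0, Sum.inr ρ => exact ρ.elim
      | k + 2, Sum.inr ρ => exact ρ.elim
      | 1, Sum.inr ρ =>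
        show (((F ⟨(x 0).1, (x 0).2⟩ : ↥(T j)) : M) ∈ U (ρ : Fin n)) ↔
          (((x 0).1 : M) ∈ U (ρ : Fin n))
        have hpr := hVpres i j F ⟨(x 0).1, (x 0).2⟩
          ⟨Fin.val (ρ : Fin n), lt_trans (Fin.is_lt (ρ : Fin n)) (Nat.lt_succ_self n)⟩
        rw [hVcast (ρ : Fin n)] at hpr
        have hrcp := hrcpres i j F ⟨(x 0).1, (x 0).2⟩
        by_cases hy : ((x 0).1 : M) ∈ rc
        · rw [hfix (x 0).1 hy (x 0).2]
        · constructor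
          · intro hmem
            exact (hpr.1 ⟨hmem, fun hc => hy (hrcp.1 hc)⟩).1
          · intro hmem
            exact (hpr.2 ⟨hmem, hy⟩).1
  obtain ⟨e, he, ⟨A, B⟩, hk⟩ := ramsey_pairs
    (fun i j => (({G : ↥rc → ↥rc | IsRes rc (T i) (T j) G},
      {G : ↥rc → ↥rc | IsRes rc (T j) (T i) G}) :
      Set (↥rc → ↥rc) × Set (↥rc → ↥rc)))
  have hA' : ∀ i j : ℕ, i < j → ∀ G : ↥rc → ↥rc,
      IsRes rc (T (e i)) (T (e j)) G ↔ G ∈ A := by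
    intro i j hij G
    have h1 : {G : ↥rc → ↥rc | IsRes rc (T (e i)) (T (e j)) G} = A :=
      congrArg Prod.fst (hk i j hij)
    constructor
    · intro hh
      rw [← h1]
      exact hh
    · intro hh
      rw [← h1] at hh
      exact hh
  have hB' : ∀ i j : ℕ, i < j → ∀ G : ↥rc → ↥rc,
      IsRes rc (T (e j)) (T (e i)) G ↔ G ∈ B := by
    intro i j hij G
    have h1 : {G : ↥rc → ↥rc | IsRes rc (T (e j)) (T (e i)) G} = B :=
      congrArg Prod.snd (hk i j hij)
    constructor
    · intro hh
      rw [← h1]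
      exact hh
    · intro hh
      rw [← h1] at hh
      exact hh
  by_cases hA : A.Nonempty
  · obtain ⟨G, hGA⟩ := hA
    have hGres : ∀ i j : ℕ, i < j → IsRes rc (T (e i)) (T (e j)) G :=
      fun i j hij => (hA' i j hij G).2 hGA
    have hpow : ∀ p : ℕ, G^[p + 1] ∈ A := by
      intro p
      induction p with
      | zero =>
        rw [Function.iterate_one]
        exact hGA
      | succ p ih =>
        have h1 := hGres 0 1 Nat.one_pos
        have h2 := (hA' 1 2 Nat.one_lt_two (G^[p + 1])).2 ih
        have h3 := IsRes.comp (hrcT (e 1)) h1 h2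
        rw [Function.iterate_succ]
        exact (hA' 0 2 Nat.zero_lt_two _).1 h3
    have hGinj : Function.Injective G := IsRes.injG (hrcT (e 0)) (hGres 0 1 Nat.one_pos)
    obtain ⟨p, q, hpq, hGpq⟩ := Finite.exists_ne_map_eq_of_infinite (fun p : ℕ => G^[p])
    have hcore : ∀ p q : ℕ, p < q → G^[q] = G^[p] → False := by
      intro p q hlt hEq
      have hiter : ∀ x, G^[q - p] x = x := by
        intro x
        have hinjp : Function.Injective (G^[p]) := Function.Injective.iterate hGinj p
        apply hinjp
        have h4 : G^[p] (G^[q - p] x) = G^[p + (q - p)] x :=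
          (Function.iterate_add_apply G p (q - p) x).symm
        rw [h4, show p + (q - p) = q from by omega, hEq]
      have hd : q - p - 1 + 1 = q - p := by omega
      have hmemA : G^[q - p] ∈ A := by
        rw [← hd]
        exact hpow (q - p - 1)
      have hres : IsRes rc (T (e 0)) (T (e 1)) (G^[q - p]) :=
        (hA' 0 1 Nat.one_pos _).2 hmemA
      exact hid (e 0) (e 1) (he Nat.one_pos).ne (G^[q - p]) hres hiter
    rcases lt_or_gt_of_ne hpq with h' | h'
    · exact hcore p q h' hGpq.symm
    · exact hcore q p h' hGpq
  · by_cases hB : B.Nonempty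
    · obtain ⟨G, hGB⟩ := hB
      have hGres : ∀ i j : ℕ, i < j → IsRes rc (T (e j)) (T (e i)) G :=
        fun i j hij => (hB' i j hij G).2 hGB
      have hpow : ∀ p : ℕ, G^[p + 1] ∈ B := by
        intro p
        induction p with
        | zero =>
          rw [Function.iterate_one]
          exact hGB
        | succ p ih =>
          have h1 := hGres 1 2 Nat.one_lt_two
          have h2 := (hB' 0 1 Nat.one_pos (G^[p + 1])).2 ih
          have h3 := IsRes.comp (hrcT (e 1)) h1 h2
          rw [Function.iterate_succ]
          exact (hB' 0 2 Nat.zero_lt_two _).1 h3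
      have hGinj : Function.Injective G := IsRes.injG (hrcT (e 2)) (hGres 1 2 Nat.one_lt_two)
      obtain ⟨p, q, hpq, hGpq⟩ := Finite.exists_ne_map_eq_of_infinite (fun p : ℕ => G^[p])
      have hcore : ∀ p q : ℕ, p < q → G^[q] = G^[p] → False := by
        intro p q hlt hEq
        have hiter : ∀ x, G^[q - p] x = x := by
          intro x
          have hinjp : Function.Injective (G^[p]) := Function.Injective.iterate hGinj p
          apply hinjp
          have h4 : G^[p] (G^[q - p] x) = G^[p + (q - p)] x :=
            (Function.iterate_add_apply G p (q - p) x).symm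
          rw [h4, show p + (q - p) = q from by omega, hEq]
        have hd : q - p - 1 + 1 = q - p := by omega
        have hmemB : G^[q - p] ∈ B := by
          rw [← hd]
          exact hpow (q - p - 1)
        have hres : IsRes rc (T (e 1)) (T (e 0)) (G^[q - p]) :=
          (hB' 0 1 Nat.one_pos _).2 hmemB
        exact hid (e 1) (e 0) (he Nat.one_pos).ne' (G^[q - p]) hres hiter
      rcases lt_or_gt_of_ne hpq with h' | h'
      · exact hcore p q h' hGpq.symm
      · exact hcore q p h' hGpq
    · refine h V hV ⟨fun t => T (e t), fun t => hfin (e t), fun i j hij => ⟨fun F => ?_⟩⟩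
      obtain ⟨G, hG⟩ := hGex (e i) (e j) F
      rcases lt_or_gt_of_ne hij with hlt | hgt
      · exact hA ⟨G, (hA' i j hlt G).1 hG⟩
      · exact hB ⟨G, (hB' j i hgt G).1 hG⟩

end MonadicNIP
end
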